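/- Let F, G : ℝ⁴ → ℝ be smooth functions of (w, z, x, y), and let Q = ∂_w∂_x + ∂_z∂_y − F_y∂_x² − G_x∂_y² + (F_x + G_y)∂_x∂_y. Consider ℝ⁵ with coordinates (w, z, x, y, λ) and the vector fields X₁ = ∂_w − F_y∂_x + (G_y + λ)∂_y and X₂ = ∂_z + (F_x − λ)∂_x − G_x∂_y. Then at every point of ℝ⁵ the Lie bracket satisfies [X₁, X₂] = Q(F)∂_x − Q(G)∂_y. In particular, X₁ and X₂ commute identically if and only if (F, G) satisfies the hyper-Hermitian system Q(F) = 0, Q(G) = 0. -/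

import Mathlib

noncomputable section

/-- Partial derivative of `f` along the `i`-th coordinate direction on `ℝⁿ`.
Coordinates on `ℝ⁴` are `(w, z, x, y) = (0, 1, 2, 3)`; on `ℝ⁵` they are
`(w, z, x, y, λ) = (0, 1, 2, 3, 4)`. -/
def pd {n : ℕ} (i : Fin n) (f : (Fin n → ℝ) → ℝ) : (Fin n → ℝ) → ℝ :=
  fun x => fderiv ℝ f x (Pi.single i 1)

/-- Lie bracket of vector fields on `ℝⁿ`:
`[X,Y](p) = (DY)(p)(X(p)) − (DX)(p)(Y(p))`. -/
def lieBr {n : ℕ} (X Y : (Fin n → ℝ) → (Fin n → ℝ)) :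
    (Fin n → ℝ) → (Fin n → ℝ) :=
  fun p => fderiv ℝ Y p (X p) - fderiv ℝ X p (Y p)

/-- Projection `(w, z, x, y, λ) ↦ (w, z, x, y)`. -/
def π4 (s : Fin 5 → ℝ) : Fin 4 → ℝ := ![s 0, s 1, s 2, s 3]

/-- The operator `Q = ∂_w∂_x + ∂_z∂_y − F_y∂_x² − G_x∂_y² + (F_x + G_y)∂_x∂_y`
applied to `h`. -/
def Qop (F G h : (Fin 4 → ℝ) → ℝ) : (Fin 4 → ℝ) → ℝ :=
  fun x =>
    pd 0 (pd 2 h) x + pd 1 (pd 3 h) x - pd 3 F x * pd 2 (pd 2 h) x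
      - pd 2 G x * pd 3 (pd 3 h) x + (pd 2 F x + pd 3 G x) * pd 2 (pd 3 h) x

/-- `X₁ = ∂_w − F_y∂_x + (G_y + λ)∂_y`. -/
def hhLax1 (F G : (Fin 4 → ℝ) → ℝ) : (Fin 5 → ℝ) → (Fin 5 → ℝ) :=
  fun s => ![1, 0, -(pd 3 F (π4 s)), pd 3 G (π4 s) + s 4, 0]

/-- `X₂ = ∂_z + (F_x − λ)∂_x − G_x∂_y`. -/
def hhLax2 (F G : (Fin 4 → ℝ) → ℝ) : (Fin 5 → ℝ) → (Fin 5 → ℝ) :=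
  fun s => ![0, 1, pd 2 F (π4 s) - s 4, -(pd 2 G (π4 s)), 0]

section helpers

def π4L : (Fin 5 → ℝ) →L[ℝ] (Fin 4 → ℝ) :=
  ContinuousLinearMap.pi (fun j => ContinuousLinearMap.proj (Fin.castSucc j))

lemma π4L_apply (s : Fin 5 → ℝ) : π4L s = π4 s := by
  funext j; fin_cases j <;> rfl

lemma pd_smooth {n : ℕ} (i : Fin n) {H : (Fin n → ℝ) → ℝ} (h : ContDiff ℝ (⊤:ℕ∞) H) :
    ContDiff ℝ (⊤:ℕ∞) (pd i H) :=
  (h.fderiv_right (by exact_mod_cast le_top)).clm_apply contDiff_const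

lemma pd_comm {n : ℕ} (a b : Fin n) {H : (Fin n → ℝ) → ℝ} (h : ContDiff ℝ (⊤:ℕ∞) H)
    (x : Fin n → ℝ) : pd a (pd b H) x = pd b (pd a H) x := by
  have hsymm : IsSymmSndFDerivAt ℝ H x := h.contDiffAt.isSymmSndFDerivAt (by rw [minSmoothness_of_isRCLikeNormedField]; exact WithTop.coe_le_coe.mpr le_top)
  have key : ∀ (a b : Fin n), pd a (pd b H) x
      = fderiv ℝ (fderiv ℝ H) x (Pi.single a 1) (Pi.single b 1) := by
    intro a b
    have hdf : DifferentiableAt ℝ (fderiv ℝ H) x :=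
      ((h.fderiv_right (m := ((⊤:ℕ∞) : WithTop ℕ∞)) (by exact_mod_cast le_top)).differentiable
        (by simp)) x
    have h3 : HasFDerivAt (pd b H)
        ((fderiv ℝ H x).comp (0 : (Fin n → ℝ) →L[ℝ] (Fin n → ℝ))
          + (fderiv ℝ (fderiv ℝ H) x).flip (Pi.single b 1)) x :=
      hdf.hasFDerivAt.clm_apply (hasFDerivAt_const _ _)
    show fderiv ℝ (pd b H) x (Pi.single a 1) = _
    rw [h3.fderiv]
    simp
  rw [key, key, hsymm]

lemma hasF_comp {h : (Fin 4 → ℝ) → ℝ} (hh : ContDiff ℝ (⊤:ℕ∞) h) (s : Fin 5 → ℝ) :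
    HasFDerivAt (fun t => h (π4 t)) ((fderiv ℝ h (π4 s)).comp π4L) s := by
  have h1 : HasFDerivAt h (fderiv ℝ h (π4 s)) (π4L s) := by
    rw [π4L_apply]
    exact ((hh.differentiable (by simp)) (π4 s)).hasFDerivAt
  have h2 := h1.comp s π4L.hasFDerivAt
  have e : (fun t => h (π4 t)) = h ∘ π4L := by
    funext t; simp [Function.comp, π4L_apply]
  rw [e]; exact h2

lemma fderiv_expand (h : (Fin 4 → ℝ) → ℝ) (x u : Fin 4 → ℝ) :
    fderiv ℝ h x u = u 0 * pd 0 h x + u 1 * pd 1 h x + u 2 * pd 2 h x + u 3 * pd 3 h x := by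
  have hu : u = u 0 • (Pi.single (0:Fin 4) (1:ℝ) : Fin 4 → ℝ)
      + u 1 • (Pi.single (1:Fin 4) (1:ℝ) : Fin 4 → ℝ)
      + u 2 • (Pi.single (2:Fin 4) (1:ℝ) : Fin 4 → ℝ)
      + u 3 • (Pi.single (3:Fin 4) (1:ℝ) : Fin 4 → ℝ) := by
    funext j; fin_cases j <;> simp [Pi.single_apply]
  conv_lhs => rw [hu]
  simp [pd]

end helpers

lemma key_bracket (F G : (Fin 4 → ℝ) → ℝ)
    (hF : ContDiff ℝ (⊤ : ℕ∞) F) (hG : ContDiff ℝ (⊤ : ℕ∞) G) (s : Fin 5 → ℝ) :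
    lieBr (hhLax1 F G) (hhLax2 F G) s
      = ![0, 0, Qop F G F (π4 s), -(Qop F G G (π4 s)), 0] := by
  have hF2 := pd_smooth 2 hF
  have hF3 := pd_smooth 3 hF
  have hG2 := pd_smooth 2 hG
  have hG3 := pd_smooth 3 hG
  have hX1 : HasFDerivAt (hhLax1 F G)
      (ContinuousLinearMap.pi
        ![0, 0, -((fderiv ℝ (pd 3 F) (π4 s)).comp π4L),
          (fderiv ℝ (pd 3 G) (π4 s)).comp π4L + ContinuousLinearMap.proj 4, 0]) s := by
    apply hasFDerivAt_pi''
    intro j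
    rw [ContinuousLinearMap.proj_pi]
    fin_cases j
    · exact hasFDerivAt_const 1 s
    · exact hasFDerivAt_const 0 s
    · exact (hasF_comp hF3 s).neg
    · exact (hasF_comp hG3 s).add (hasFDerivAt_apply 4 s)
    · exact hasFDerivAt_const 0 s
  have hX2 : HasFDerivAt (hhLax2 F G)
      (ContinuousLinearMap.pi
        ![0, 0, (fderiv ℝ (pd 2 F) (π4 s)).comp π4L - ContinuousLinearMap.proj 4,
          -((fderiv ℝ (pd 2 G) (π4 s)).comp π4L), 0]) s := by
    apply hasFDerivAt_pi''
    intro j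
    rw [ContinuousLinearMap.proj_pi]
    fin_cases j
    · exact hasFDerivAt_const 0 s
    · exact hasFDerivAt_const 1 s
    · exact (hasF_comp hF2 s).sub (hasFDerivAt_apply 4 s)
    · exact (hasF_comp hG2 s).neg
    · exact hasFDerivAt_const 0 s
  have e1 : π4 (hhLax1 F G s) = ![1, 0, -(pd 3 F (π4 s)), pd 3 G (π4 s) + s 4] := by
    funext k; fin_cases k <;> rfl
  have e2 : π4 (hhLax2 F G s) = ![0, 1, pd 2 F (π4 s) - s 4, -(pd 2 G (π4 s))] := by
    funext k; fin_cases k <;> rfl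
  have z1 : (hhLax1 F G s) 4 = 0 := rfl
  have z2 : (hhLax2 F G s) 4 = 0 := rfl
  simp only [lieBr]
  rw [hX1.fderiv, hX2.fderiv]
  funext j
  simp only [Pi.sub_apply, ContinuousLinearMap.pi_apply]
  fin_cases j
  · show (0 : (Fin 5 → ℝ) →L[ℝ] ℝ) (hhLax1 F G s)
        - (0 : (Fin 5 → ℝ) →L[ℝ] ℝ) (hhLax2 F G s) = (0:ℝ)
    simp
  · show (0 : (Fin 5 → ℝ) →L[ℝ] ℝ) (hhLax1 F G s)
        - (0 : (Fin 5 → ℝ) →L[ℝ] ℝ) (hhLax2 F G s) = (0:ℝ)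
    simp
  · show (((fderiv ℝ (pd 2 F) (π4 s)).comp π4L - ContinuousLinearMap.proj (4:Fin 5) :
            (Fin 5 → ℝ) →L[ℝ] ℝ))
          (hhLax1 F G s)
        - (-((fderiv ℝ (pd 3 F) (π4 s)).comp π4L)) (hhLax2 F G s) = Qop F G F (π4 s)
    simp only [ContinuousLinearMap.sub_apply, ContinuousLinearMap.neg_apply,
      ContinuousLinearMap.comp_apply, ContinuousLinearMap.proj_apply, π4L_apply]
    rw [e1, e2, fderiv_expand, fderiv_expand, z1]
    simp only [Matrix.cons_val_zero, Matrix.cons_val_one, Matrix.head_cons,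
      Matrix.cons_val_two, Matrix.tail_cons, Matrix.cons_val_three, Qop]
    rw [pd_comm 3 2 hF (π4 s)]
    ring
  · show (-((fderiv ℝ (pd 2 G) (π4 s)).comp π4L)) (hhLax1 F G s)
        - (((fderiv ℝ (pd 3 G) (π4 s)).comp π4L + ContinuousLinearMap.proj (4:Fin 5) :
            (Fin 5 → ℝ) →L[ℝ] ℝ))
          (hhLax2 F G s) = -(Qop F G G (π4 s))
    simp only [ContinuousLinearMap.add_apply, ContinuousLinearMap.neg_apply,
      ContinuousLinearMap.comp_apply, ContinuousLinearMap.proj_apply, π4L_apply]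
    rw [e1, e2, fderiv_expand, fderiv_expand, z2]
    simp only [Matrix.cons_val_zero, Matrix.cons_val_one, Matrix.head_cons,
      Matrix.cons_val_two, Matrix.tail_cons, Matrix.cons_val_three, Qop]
    rw [pd_comm 3 2 hG (π4 s)]
    ring
  · show (0 : (Fin 5 → ℝ) →L[ℝ] ℝ) (hhLax1 F G s)
        - (0 : (Fin 5 → ℝ) →L[ℝ] ℝ) (hhLax2 F G s) = (0:ℝ)
    simp

/-- For smooth `F, G`, one has `[X₁, X₂] = Q(F)∂_x − Q(G)∂_y` at every point of
`ℝ⁵`; in particular `X₁` and `X₂` commute identically iff `(F, G)` solves the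
hyper-Hermitian system `Q(F) = 0`, `Q(G) = 0`. -/
theorem hyperhermitian_lax_bracket
    (F G : (Fin 4 → ℝ) → ℝ)
    (hF : ContDiff ℝ (⊤ : ℕ∞) F)
    (hG : ContDiff ℝ (⊤ : ℕ∞) G) :
    (∀ s : Fin 5 → ℝ,
      lieBr (hhLax1 F G) (hhLax2 F G) s
        = ![0, 0, Qop F G F (π4 s), -(Qop F G G (π4 s)), 0]) ∧
    ((∀ s : Fin 5 → ℝ, lieBr (hhLax1 F G) (hhLax2 F G) s = 0) ↔
      (∀ x : Fin 4 → ℝ, Qop F G F x = 0 ∧ Qop F G G x = 0)) := by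
  refine ⟨key_bracket F G hF hG, ?_, ?_⟩
  · intro h x
    have hπ : π4 ![x 0, x 1, x 2, x 3, 0] = x := by
      funext j; fin_cases j <;> rfl
    have hs := key_bracket F G hF hG ![x 0, x 1, x 2, x 3, 0]
    rw [h _, hπ] at hs
    constructor
    · have := congrFun hs 2
      simpa using this.symm
    · have := congrFun hs 3
      simp only [Pi.zero_apply] at this
      simpa [neg_eq_zero] using this.symm
  · intro h s
    rw [key_bracket F G hF hG s, (h (π4 s)).1, (h (π4 s)).2]
    funext j; fin_cases j <;> simp
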